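/- Let π ∈ S_n, let 1 ≤ m ≤ n, and let k ≥ 0. Then s^k(π_{≥m}) occurs as a (not necessarily contiguous) subsequence of s^k(π), where π_{≥m} denotes the subsequence of entries of π greater than or equal to m. -/

import Mathlib

noncomputable section
theorem foldrMaxMem (x : ℕ) (xs : List ℕ) : (x :: xs).foldr max 0 ∈ x :: xs := by
  induction xs generalizing x with
  | nil => simp
  | cons y ys ih =>
    rcases max_choice x ((y :: ys).foldr max 0) with h | h
    · simp only [List.foldr_cons] at h ⊢
      rw [h]; exact List.mem_cons_self
    · simp only [List.foldr_cons] at h ⊢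
      rw [h]; exact List.mem_cons_of_mem _ (ih y)
theorem takeWhileLt (l : List ℕ) (m : ℕ) (hm : m ∈ l) :
    (l.takeWhile (fun y => y ≠ m)).length < l.length := by
  have hd : l.dropWhile (fun y => y ≠ m) ≠ [] := by
    intro h; rw [List.dropWhile_eq_nil_iff] at h; simpa using h m hm
  have h1 : (l.takeWhile (fun y => y ≠ m)).length
      + (l.dropWhile (fun y => y ≠ m)).length = l.length := by
    rw [← List.length_append, List.takeWhile_append_dropWhile]
  have h2 : 0 < (l.dropWhile (fun y => y ≠ m)).length := List.length_pos_iff.mpr hd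
  omega
theorem dropWhileDropLt (l : List ℕ) (m : ℕ) (hl : l ≠ []) :
    ((l.dropWhile (fun y => y ≠ m)).drop 1).length < l.length := by
  have h1 : (l.takeWhile (fun y => y ≠ m)).length
      + (l.dropWhile (fun y => y ≠ m)).length = l.length := by
    rw [← List.length_append, List.takeWhile_append_dropWhile]
  have h2 : 0 < l.length := List.length_pos_iff.mpr hl
  rw [List.length_drop]; omega

/-- West's stack-sorting map `s`: `s([]) = []`, `s(L m R) = s(L) s(R) m` for `m` the maximum. -/
def ss : List ℕ → List ℕ
  | [] => []
  | x :: xs =>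
    ss ((x :: xs).takeWhile (fun y => y ≠ (x :: xs).foldr max 0)) ++
    ss (((x :: xs).dropWhile (fun y => y ≠ (x :: xs).foldr max 0)).drop 1) ++
    [(x :: xs).foldr max 0]
termination_by l => l.length
decreasing_by
  · exact takeWhileLt _ _ (foldrMaxMem _ _)
  · exact dropWhileDropLt _ _ (by simp)

/-- `met π` : the least `k ≥ 0` with `s^k(π)` increasing. -/
def met (l : List ℕ) : ℕ := sInf {k | List.Pairwise (· < ·) (ss^[k] l)}

/-- Right-to-left maxima of a list, read from left to right.  For the prefix of `s^{i-1}(π)`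
before `0` this is exactly the column sequence `C_{π,i}`. -/
def rtlMax : List ℕ → List ℕ
  | [] => []
  | x :: xs => if ∀ y ∈ xs, y < x then x :: rtlMax xs else rtlMax xs

/-- The blocks `b_{π,i,j}`: the segments strictly between consecutive right-to-left maxima. -/
def blocksOf : List ℕ → List (List ℕ)
  | [] => []
  | x :: xs =>
    if ∀ y ∈ xs, y < x then [] :: blocksOf xs
    else
      match blocksOf xs with
      | [] => [[x]]
      | b :: bs => (x :: b) :: bs

/-- The part of `s^{i-1}(π)` strictly before the entry `0`. -/
def prefixAt (π : List ℕ) (i : ℕ) : List ℕ := (ss^[i-1] π).takeWhile (fun x => x ≠ 0)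

/-- The column sequence `C_{π,i}`. -/
def colSeqAt (π : List ℕ) (i : ℕ) : List ℕ := rtlMax (prefixAt π i)

/-- The block sequence `B_{π,i}`. -/
def blocksAt (π : List ℕ) (i : ℕ) : List (List ℕ) := blocksOf (prefixAt π i)

/-- `col_π(v)`: the unique `i` with `v ∈ C_{π,i}` (as the least such `i ≥ 1`). -/
def colOf (π : List ℕ) (v : ℕ) : ℕ := sInf {i | 1 ≤ i ∧ v ∈ colSeqAt π i}

/-- `colpos_π(v)`: the (1-indexed) position of `v` in `C_{π,col_π(v)}`. -/
def colposOf (π : List ℕ) (v : ℕ) : ℕ := (colSeqAt π (colOf π v)).idxOf v + 1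

/-- `leftof_π(v) = c_{π,col_π(v)-1,j}` for the unique `j` with `v = max(b_{π,col_π(v)-1,j})`. -/
def leftOf (π : List ℕ) (v : ℕ) : ℕ :=
  (colSeqAt π (colOf π v - 1)).getD
    (((blocksAt π (colOf π v - 1)).map (fun b => b.foldr max 0)).idxOf v) 0

/-- `row_π(v)`: follow `leftof` back to column 1 and take `colpos` there. -/
def rowOf (π : List ℕ) (v : ℕ) : ℕ := colposOf π ((leftOf π)^[colOf π v - 1] v)

/-- `upof_π(v) = c_{π,col_π(v),colpos_π(v)-1}`. -/
def upOf (π : List ℕ) (v : ℕ) : ℕ := (colSeqAt π (colOf π v)).getD (colposOf π v - 2) 0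

/-- The stack-sorting tableau `T_π(v) = (col_π(v), row_π(v))`. -/
def Tmap (π : List ℕ) (v : ℕ) : ℕ × ℕ := (colOf π v, rowOf π v)

/-- The composition `α_π = (|{v ∈ [n] : row_π(v) = j}|)_{j=1}^{|C_{π,1}|}` (here `n = |π| - 1`). -/
def alphaOf (π : List ℕ) : List ℕ :=
  (List.range' 1 (colSeqAt π 1).length).map
    (fun j => ((Finset.Icc 1 (π.length - 1)).filter (fun v => rowOf π v = j)).card)

/-- Membership in the composition diagram `D(α) = {(i,j) : 1 ≤ j ≤ ℓ(α), 1 ≤ i ≤ α_j}`. -/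
def inDiagram (α : List ℕ) (p : ℕ × ℕ) : Prop :=
  1 ≤ p.1 ∧ 1 ≤ p.2 ∧ p.2 ≤ α.length ∧ p.1 ≤ α.getD (p.2 - 1) 0

instance inDiagramDec (α : List ℕ) : DecidablePred (inDiagram α) := fun p => by
  unfold inDiagram; infer_instance

/-- `D(α)` as a finite set. -/
def diagramFinset (α : List ℕ) : Finset (ℕ × ℕ) :=
  (Finset.range (α.foldr max 0 + 1) ×ˢ Finset.range (α.length + 1)).filter
    (fun p => inDiagram α p)

/-- `colpos_α(i,j) = |{(i,j') ∈ D(α) : j' < j} ∪ {(i,0)}|`. -/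
def colposA (α : List ℕ) (p : ℕ × ℕ) : ℕ :=
  (((Finset.range p.2).filter (fun j' => inDiagram α (p.1, j'))) ∪ {0}).card

/-- `leftof_α(i,j) = (i-1,j)`. -/
def leftA (p : ℕ × ℕ) : ℕ × ℕ := (p.1 - 1, p.2)

/-- `upof_α(i,j) = (i, max({j' < j : (i,j') ∈ D(α)} ∪ {0}))`. -/
def upA (α : List ℕ) (p : ℕ × ℕ) : ℕ × ℕ :=
  (p.1, (((Finset.range p.2).filter (fun j' => inDiagram α (p.1, j'))) ∪ {0}).sup id)

/-- The hook length `h_α(i,j)`. -/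
def hook (α : List ℕ) (p : ℕ × ℕ) : ℕ :=
  if 1 < p.1 then
    ((diagramFinset α).filter (fun q =>
      q.1 ≤ p.1 - 1 ∧ (upA α (p.1 - 1, p.2)).2 < q.2 ∧ q.2 ≤ p.2)).card
  else 1

/-- The segment `B_{π,T}(i,j,k)` of `s^{k-1}(π)`, where `U = T⁻¹`. -/
def Bseg (π : List ℕ) (α : List ℕ) (U : ℕ × ℕ → ℕ) (i j k : ℕ) : List ℕ :=
  if (upA α (leftA (i, j))).2 > 0 then
    ((ss^[k-1] π).take ((ss^[k-1] π).idxOf (U (k, j)) + 1)).drop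
      ((ss^[k-1] π).idxOf (U (k, (upA α (leftA (i, j))).2)) + 1)
  else
    (ss^[k-1] π).take ((ss^[k-1] π).idxOf (U (k, j)) + 1)

/-- The inverse `T_π⁻¹` of the stack-sorting tableau. -/
def invTmap (π : List ℕ) : ℕ × ℕ → ℕ :=
  Function.invFunOn (Tmap π) (Set.Icc 1 (π.length - 1))

/-- A linear extension of `D(α)`, encoded as the list `[T(1), …, T(n)]`:
`T` is a bijection `{1,…,n} → D(α)` with `T(a) ≥_D T(b) → a ≥ b`. -/
def isLinExt (α : List ℕ) (ℓ : List (ℕ × ℕ)) : Prop :=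
  ℓ.Nodup ∧ (∀ p, p ∈ ℓ ↔ inDiagram α p) ∧
  ∀ a b, a < ℓ.length → b < ℓ.length →
    (ℓ.getD a (0, 0)).1 ≤ (ℓ.getD b (0, 0)).1 ∧ (ℓ.getD a (0, 0)).2 ≤ (ℓ.getD b (0, 0)).2 →
    b ≤ a
end

lemma ss_eq (l : List ℕ) (h : l ≠ []) :
    ss l = ss (l.takeWhile (fun y => y ≠ l.foldr max 0)) ++
           ss ((l.dropWhile (fun y => y ≠ l.foldr max 0)).drop 1) ++ [l.foldr max 0] := by
  cases l with
  | nil => exact absurd rfl h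
  | cons x xs => rw [ss]

lemma ss_nil : ss [] = [] := by rw [ss]

lemma le_foldrMax {l : List ℕ} {x : ℕ} (hx : x ∈ l) : x ≤ l.foldr max 0 := by
  induction l with
  | nil => simp at hx
  | cons a l ih =>
    rcases List.mem_cons.1 hx with rfl | h
    · simp
    · simp only [List.foldr_cons, le_max_iff]; exact Or.inr (ih h)

lemma foldrMax_le {l : List ℕ} {M : ℕ} (h : ∀ x ∈ l, x ≤ M) : l.foldr max 0 ≤ M := by
  induction l with
  | nil => simp
  | cons a l ih =>
    simp only [List.foldr_cons, max_le_iff]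
    exact ⟨h a (by simp), ih fun x hx => h x (List.mem_cons_of_mem _ hx)⟩

lemma takeWhile_filter_comm (m M : ℕ) (hmM : m ≤ M) (l : List ℕ) :
    (l.filter (fun x => m ≤ x)).takeWhile (fun y => y ≠ M)
      = (l.takeWhile (fun y => y ≠ M)).filter (fun x => m ≤ x) := by
  induction l with
  | nil => rfl
  | cons a l ih =>
    by_cases ha : m ≤ a
    · rw [List.filter_cons_of_pos (by simpa using ha)]
      by_cases haM : a = M
      · subst haM
        rw [List.takeWhile_cons_of_neg (by simp), List.takeWhile_cons_of_neg (by simp)]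
        rfl
      · rw [List.takeWhile_cons_of_pos (by simpa using haM),
          List.takeWhile_cons_of_pos (by simpa using haM),
          List.filter_cons_of_pos (by simpa using ha), ih]
    · have haM : a ≠ M := by omega
      rw [List.filter_cons_of_neg (by simpa using ha),
        List.takeWhile_cons_of_pos (by simpa using haM),
        List.filter_cons_of_neg (by simpa using ha), ih]

lemma dropWhile_filter_comm (m M : ℕ) (hmM : m ≤ M) (l : List ℕ) :
    (l.filter (fun x => m ≤ x)).dropWhile (fun y => y ≠ M)
      = (l.dropWhile (fun y => y ≠ M)).filter (fun x => m ≤ x) := by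
  induction l with
  | nil => rfl
  | cons a l ih =>
    by_cases ha : m ≤ a
    · rw [List.filter_cons_of_pos (by simpa using ha)]
      by_cases haM : a = M
      · subst haM
        rw [List.dropWhile_cons_of_neg (by simp), List.dropWhile_cons_of_neg (by simp),
          List.filter_cons_of_pos (by simpa using ha)]
      · rw [List.dropWhile_cons_of_pos (by simpa using haM),
          List.dropWhile_cons_of_pos (by simpa using haM), ih]
    · have haM : a ≠ M := by omega
      rw [List.filter_cons_of_neg (by simpa using ha),
        List.dropWhile_cons_of_pos (by simpa using haM), ih]

lemma dropWhile_eq_cons (l : List ℕ) (M : ℕ) (hM : M ∈ l) :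
    ∃ D, l.dropWhile (fun y => y ≠ M) = M :: D := by
  induction l with
  | nil => simp at hM
  | cons a l ih =>
    by_cases haM : a = M
    · subst haM
      exact ⟨l, by rw [List.dropWhile_cons_of_neg (by simp)]⟩
    · rcases List.mem_cons.1 hM with h | h
      · exact absurd h.symm haM
      · rcases ih h with ⟨D, hD⟩
        exact ⟨D, by rw [List.dropWhile_cons_of_pos (by simpa using haM), hD]⟩

lemma ss_perm (l : List ℕ) : (ss l).Perm l := by
  generalize hn : l.length = n
  induction n using Nat.strong_induction_on generalizing l with
  | _ n ih =>
    cases l with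
    | nil => rw [ss_nil]
    | cons x xs =>
      set l := x :: xs with hl
      have hne : l ≠ [] := by simp [hl]
      have hM : l.foldr max 0 ∈ l := foldrMaxMem x xs
      obtain ⟨D, hD⟩ := dropWhile_eq_cons l _ hM
      rw [ss_eq l hne, hD]
      simp only [List.drop_succ_cons, List.drop_zero]
      have h1 := ih _ (hn ▸ takeWhileLt l _ hM) _ rfl
      have h2 : D.length < n := by
        have := hn ▸ dropWhileDropLt l (l.foldr max 0) hne
        rw [hD] at this; simpa using this
      have h2' := ih _ h2 D rfl
      have hsplit : l.takeWhile (fun y => y ≠ l.foldr max 0) ++ (l.foldr max 0 :: D) = l := by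
        rw [← hD, List.takeWhile_append_dropWhile]
      have final : (ss (l.takeWhile (fun y => y ≠ l.foldr max 0)) ++ ss D ++
          [l.foldr max 0]).Perm
          (l.takeWhile (fun y => y ≠ l.foldr max 0) ++ (l.foldr max 0 :: D)) := by
        refine List.Perm.trans ((h1.append h2').append (List.Perm.refl [l.foldr max 0])) ?_
        rw [List.append_assoc]
        exact List.Perm.append_left _ (List.perm_append_singleton _ _)
      rw [hsplit] at final
      exact final

lemma ss_filter (m : ℕ) (l : List ℕ) :
    ss (l.filter (fun x => m ≤ x)) = (ss l).filter (fun x => m ≤ x) := by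
  generalize hn : l.length = n
  induction n using Nat.strong_induction_on generalizing l with
  | _ n ih =>
    cases l with
    | nil => rw [List.filter_nil, ss_nil, List.filter_nil]
    | cons x xs =>
      set l := x :: xs with hl
      have hne : l ≠ [] := by simp [hl]
      have hM : l.foldr max 0 ∈ l := foldrMaxMem x xs
      set M := l.foldr max 0 with hMdef
      by_cases hmM : m ≤ M
      · have hMf : M ∈ l.filter (fun x => m ≤ x) := by
          rw [List.mem_filter]; exact ⟨hM, by simpa using hmM⟩
        have hfne : l.filter (fun x => m ≤ x) ≠ [] := by
          intro h; rw [h] at hMf; simp at hMf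
        have hMax : (l.filter (fun x => m ≤ x)).foldr max 0 = M := by
          refine le_antisymm (foldrMax_le ?_) (le_foldrMax hMf)
          intro y hy; exact le_foldrMax (List.mem_of_mem_filter hy)
        obtain ⟨D, hD⟩ := dropWhile_eq_cons l M hM
        rw [ss_eq _ hfne, ss_eq l hne, hMax, ← hMdef,
          takeWhile_filter_comm m M hmM, dropWhile_filter_comm m M hmM, hD,
          List.filter_cons_of_pos (by simpa using hmM)]
        simp only [List.drop_succ_cons, List.drop_zero]
        have h1 := ih _ (hn ▸ takeWhileLt l M hM) (l.takeWhile (fun y => y ≠ M)) rfl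
        have h2 : D.length < n := by
          have := hn ▸ dropWhileDropLt l M hne
          rw [hD] at this; simpa using this
        have h2' := ih _ h2 D rfl
        rw [h1, h2', List.filter_append, List.filter_append,
          List.filter_cons_of_pos (by simpa using hmM), List.filter_nil]
      · have hfil : l.filter (fun x => m ≤ x) = [] := by
          rw [List.filter_eq_nil_iff]
          intro y hy
          have : y ≤ M := le_foldrMax hy
          simp; omega
        rw [hfil, ss_nil]
        have hp : ((ss l).filter (fun x => m ≤ x)).Perm (l.filter (fun x => m ≤ x)) :=
          (ss_perm l).filter _
        rw [hfil] at hp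
        exact (List.Perm.eq_nil hp).symm


/-- Corollary 5.4: for `π ∈ Sₙ`, `1 ≤ m ≤ n` and `k ≥ 0`, `s^k(π_{≥ m})` occurs as a
subsequence of `s^k(π)`. -/
theorem stmt_5 (n m : ℕ) (hm : 1 ≤ m) (hmn : m ≤ n) (π : List ℕ)
    (hπ : π.Perm (List.range' 1 n)) (k : ℕ) :
    (ss^[k] (π.filter (fun x => m ≤ x))).Sublist (ss^[k] π) := by
  have h : ss^[k] (π.filter (fun x => m ≤ x)) = (ss^[k] π).filter (fun x => m ≤ x) := by
    induction k with
    | zero => rfl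
    | succ k ih =>
      rw [Function.iterate_succ_apply', Function.iterate_succ_apply', ih, ss_filter]
  rw [h]
  exact List.filter_sublist
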